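/- Let k ≥ 1 be an integer and let u be a C² function on ℂ satisfying Δu = 2(e^u − e^{(1−k)u}) and u ≥ 0 everywhere. Then u ≡ 0. -/

import Mathlib

open Filter Topology

lemma second_deriv_test_max (g : ℝ → ℝ) (hmax : IsLocalMax g 0)
    (hg : ∀ᶠ t in 𝓝 (0:ℝ), DifferentiableAt ℝ g t)
    (hg' : DifferentiableAt ℝ (deriv g) 0) :
    deriv (deriv g) 0 ≤ 0 := by
  by_contra hcon
  push_neg at hcon
  set c := deriv (deriv g) 0 with hc
  have h0 : deriv g 0 = 0 := hmax.deriv_eq_zero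
  have hslope : Tendsto (slope (deriv g) 0) (𝓝[≠] 0) (𝓝 c) :=
    hasDerivAt_iff_tendsto_slope.mp hg'.hasDerivAt
  have hev : ∀ᶠ t in 𝓝[≠] (0:ℝ), c/2 < slope (deriv g) 0 t :=
    hslope.eventually (eventually_gt_nhds (by linarith))
  rw [eventually_nhdsWithin_iff] at hev
  have hall : ∀ᶠ t in 𝓝 (0:ℝ),
      (t ∈ ({(0:ℝ)}ᶜ : Set ℝ) → c/2 < slope (deriv g) 0 t) ∧
      DifferentiableAt ℝ g t ∧ g t ≤ g 0 := hev.and (hg.and hmax)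
  obtain ⟨δ, hδ, hδp⟩ := Metric.eventually_nhds_iff.mp hall
  have hmem : ∀ t : ℝ, |t| < δ → (t ≠ 0 → c/2 < slope (deriv g) 0 t)
      ∧ DifferentiableAt ℝ g t ∧ g t ≤ g 0 := by
    intro t ht
    have := hδp (by simpa [Real.dist_eq] using ht)
    simpa using this
  have hpos : ∀ t ∈ Set.Ioo (0:ℝ) (δ/2), 0 < deriv g t := by
    intro t ht
    have h1 : |t| < δ := by rw [abs_of_pos ht.1]; linarith [ht.2]
    have h2 := (hmem t h1).1 (ne_of_gt ht.1)
    have : slope (deriv g) 0 t = deriv g t / t := by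
      simp [slope_def_field, h0, div_eq_div_iff]
    rw [this] at h2
    have hc2 : 0 < c/2 := by linarith
    have h3 := lt_trans hc2 h2
    rcases div_pos_iff.mp h3 with h|h
    · exact h.1
    · exact absurd ht.1 (by linarith [h.2])
  have hcont : ContinuousOn g (Set.Icc 0 (δ/2)) := by
    intro t ht
    have h1 : |t| < δ := by
      rw [abs_of_nonneg ht.1]; linarith [ht.2]
    exact ((hmem t h1).2.1).continuousAt.continuousWithinAt
  have hmono : StrictMonoOn g (Set.Icc 0 (δ/2)) := by
    apply strictMonoOn_of_deriv_pos (convex_Icc _ _) hcont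
    intro t ht
    rw [interior_Icc] at ht
    exact hpos t ht
  have hlt : g 0 < g (δ/2) := by
    apply hmono (Set.left_mem_Icc.2 (by linarith)) (Set.right_mem_Icc.2 (by linarith))
    linarith
  have : g (δ/2) ≤ g 0 := (hmem (δ/2) (by rw [abs_of_pos (by linarith)]; linarith)).2.2
  linarith

lemma vline (S x y ε : ℝ) (h : x^2 + y^2 < S) :
    ∃ F : ℝ → ℝ,
      (∀ᶠ t in 𝓝 (0:ℝ), DifferentiableAt ℝ
        (fun t : ℝ => ε + 2*(Real.log S - Real.log (S - ((x+t)^2 + y^2)))) t) ∧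
      (deriv (fun t : ℝ => ε + 2*(Real.log S - Real.log (S - ((x+t)^2 + y^2)))) =ᶠ[𝓝 (0:ℝ)] F) ∧
      DifferentiableAt ℝ F 0 ∧
      deriv F 0 = (4*(S - (x^2+y^2)) + 8*x^2)/(S - (x^2+y^2))^2 := by
  set f : ℝ → ℝ := fun t => ε + 2*(Real.log S - Real.log (S - ((x+t)^2 + y^2))) with hf
  set F : ℝ → ℝ := fun t => (4*(x+t))/(S - ((x+t)^2 + y^2)) with hF
  set U : Set ℝ := {t : ℝ | (x+t)^2 + y^2 < S} with hUdef
  have hU : IsOpen U := isOpen_lt (by fun_prop) continuous_const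
  have h0 : (0:ℝ) ∈ U := by simpa [hUdef] using h
  have hden : ∀ t : ℝ, HasDerivAt (fun t : ℝ => S - ((x+t)^2 + y^2)) (-(2*(x+t))) t := by
    intro t
    have h1 : HasDerivAt (fun t : ℝ => (x+t)^2 + y^2) (2*(x+t)) t := by
      have h2 := (((hasDerivAt_id t).const_add x).pow 2).add_const (y^2)
      simpa using h2
    simpa using h1.const_sub S
  have hder : ∀ t ∈ U, HasDerivAt f (F t) t := by
    intro t ht
    have hD : 0 < S - ((x+t)^2 + y^2) := sub_pos.2 ht
    have h2 : HasDerivAt (fun t : ℝ => Real.log (S - ((x+t)^2+y^2)))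
        (-(2*(x+t))/(S - ((x+t)^2+y^2))) t := (hden t).log hD.ne'
    have h3 := (((hasDerivAt_const t (Real.log S)).sub h2).const_mul 2).const_add ε
    convert h3 using 1
    · rfl
    · rfl
    · rfl
    rw [hF]
    field_simp
    ring
  have hEq : deriv f =ᶠ[𝓝 (0:ℝ)] F :=
    Filter.eventually_iff_exists_mem.mpr ⟨U, hU.mem_nhds h0, fun t ht => (hder t ht).deriv⟩
  have hdiff : ∀ᶠ t in 𝓝 (0:ℝ), DifferentiableAt ℝ f t :=
    Filter.eventually_iff_exists_mem.mpr ⟨U, hU.mem_nhds h0, fun t ht => (hder t ht).differentiableAt⟩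
  have hD0 : 0 < S - ((x+(0:ℝ))^2 + y^2) := by simpa using sub_pos.2 h
  have hnum : HasDerivAt (fun t : ℝ => 4*(x+t)) 4 0 := by
    simpa using ((hasDerivAt_id (0:ℝ)).const_add x).const_mul 4
  have hFder := hnum.div (hden 0) hD0.ne'
  have hFval : deriv F 0 = (4*(S - (x^2+y^2)) + 8*x^2)/(S - (x^2+y^2))^2 := by
    rw [show deriv F 0 = _ from hFder.deriv]
    have hx0 : S - ((x+(0:ℝ))^2 + y^2) = S - (x^2+y^2) := by ring
    rw [hx0]
    field_simp
    ring
  exact ⟨F, hdiff, hEq, hFder.differentiableAt, hFval⟩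

lemma sub_deriv2 (a f F : ℝ → ℝ) (ha : ContDiff ℝ 2 a)
    (hfd : ∀ᶠ t in 𝓝 (0:ℝ), DifferentiableAt ℝ f t)
    (hEq : deriv f =ᶠ[𝓝 (0:ℝ)] F) (hF : DifferentiableAt ℝ F 0)
    (hmax : IsLocalMax (fun t => a t - f t) 0) :
    deriv (deriv a) 0 ≤ deriv F 0 := by
  have ha' : ContDiff ℝ (1+1) a := by
    rw [show ((1:WithTop ℕ∞)+1) = 2 by norm_num]; exact ha
  have haD : Differentiable ℝ a := ha.differentiable (by norm_num)
  have haD1 : ContDiff ℝ 1 (deriv a) := (contDiff_succ_iff_deriv.mp ha').2.2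
  have hda : Differentiable ℝ (deriv a) := haD1.differentiable one_ne_zero
  set g : ℝ → ℝ := fun t => a t - f t with hg
  have hgd : ∀ᶠ t in 𝓝 (0:ℝ), DifferentiableAt ℝ g t :=
    hfd.mono fun t ht => (haD t).sub ht
  have hgEq : deriv g =ᶠ[𝓝 (0:ℝ)] fun t => deriv a t - F t := by
    filter_upwards [hfd, hEq] with t ht hE
    rw [hg]
    rw [deriv_fun_sub (haD t) ht, hE]
  have hsum : DifferentiableAt ℝ (fun t => deriv a t - F t) 0 := (hda 0).sub hF
  have hgd' : DifferentiableAt ℝ (deriv g) 0 := hsum.congr_of_eventuallyEq hgEq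
  have h2 := second_deriv_test_max g hmax hgd hgd'
  have h3 : deriv (deriv g) 0 = deriv (deriv a) 0 - deriv F 0 := by
    rw [hgEq.deriv_eq, deriv_fun_sub (hda 0) hF]
  linarith

/-- The Euclidean Laplacian of `f : ℂ → ℝ` at `z`, computed as the sum of the
second derivatives along the real and imaginary coordinate directions. -/
noncomputable def lapC (f : ℂ → ℝ) (z : ℂ) : ℝ :=
  deriv (deriv (fun t : ℝ => f (z + t))) 0 +
  deriv (deriv (fun t : ℝ => f (z + t * Complex.I))) 0

lemma key0 (k : ℕ) (hk : 1 ≤ k) (u : ℂ → ℝ) (hu : ContDiff ℝ 2 u)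
    (heq : ∀ z : ℂ,
      lapC u z = 2 * (Real.exp (u z) - Real.exp ((1 - (k : ℝ)) * u z)))
    (hnn : ∀ z : ℂ, 0 ≤ u z) (ε : ℝ) (hε : 0 < ε) : u 0 ≤ ε := by
  have hexp1 : 1 < Real.exp ε := by nlinarith [Real.add_one_le_exp ε]
  obtain ⟨S, hSdef⟩ : ∃ S : ℝ, S = 4 / (Real.exp ε - 1) := ⟨_, rfl⟩
  have hS : 0 < S := by
    rw [hSdef]; apply div_pos (by norm_num); linarith
  have hSe : Real.exp ε * S = S + 4 := by
    have h : (Real.exp ε - 1) * S = 4 := by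
      rw [hSdef]; field_simp
      rw [div_self (by linarith : Real.exp ε - 1 ≠ 0)]
    linear_combination h
  obtain ⟨v, hvdef⟩ : ∃ v : ℂ → ℝ, v = fun z => ε + 2*(Real.log S - Real.log (S - Complex.normSq z)) := ⟨_, rfl⟩
  -- bound on the big ball
  obtain ⟨zM, hzM, hM⟩ := (isCompact_closedBall (0:ℂ) (Real.sqrt S)).exists_isMaxOn
    ⟨0, Metric.mem_closedBall_self (Real.sqrt_nonneg S)⟩ hu.continuous.continuousOn
  obtain ⟨M, hMdef⟩ : ∃ M : ℝ, M = u zM := ⟨_, rfl⟩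
  have hM0 : 0 ≤ M := by rw [hMdef]; exact hnn zM
  obtain ⟨c, hcdef⟩ : ∃ c : ℝ, c = Real.exp ((ε - M)/2) := ⟨_, rfl⟩
  have hc : 0 < c := by rw [hcdef]; exact Real.exp_pos _
  have hminpos : 0 < min c 1 := lt_min hc one_pos
  obtain ⟨τ, hτdef⟩ : ∃ τ : ℝ, τ = S * min c 1 / 2 := ⟨_, rfl⟩
  have hτ : 0 < τ := by rw [hτdef]; positivity
  have hτS : τ ≤ S/2 := by
    have : min c 1 ≤ 1 := min_le_right _ _
    rw [hτdef]; nlinarith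
  obtain ⟨ρ, hρdef⟩ : ∃ ρ : ℝ, ρ = Real.sqrt (S - τ) := ⟨_, rfl⟩
  have hSτpos : 0 < S - τ := by linarith
  -- norm facts
  have hnorm : ∀ z : ℂ, ‖z‖ = Real.sqrt (Complex.normSq z) := by
    intro z; rw [Complex.norm_def]
  have hmem1 : ∀ z : ℂ, z ∈ Metric.closedBall (0:ℂ) ρ → Complex.normSq z ≤ S - τ := by
    intro z hz
    rw [Metric.mem_closedBall, dist_zero_right, hnorm, hρdef] at hz
    exact (Real.sqrt_le_sqrt_iff hSτpos.le).mp hz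
  have hmem2 : ∀ z : ℂ, Complex.normSq z ≤ S - τ → z ∈ Metric.closedBall (0:ℂ) (Real.sqrt S) := by
    intro z hz
    rw [Metric.mem_closedBall, dist_zero_right, hnorm]
    exact (Real.sqrt_le_sqrt_iff hS.le).mpr (by linarith)
  -- continuity of v on the closed ball of radius ρ
  have hρ0 : 0 ≤ ρ := by rw [hρdef]; exact Real.sqrt_nonneg _
  have hvc : ContinuousOn v (Metric.closedBall (0:ℂ) ρ) := by
    rw [hvdef]
    apply continuousOn_const.add
    apply ContinuousOn.mul continuousOn_const
    apply continuousOn_const.sub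
    intro z hz
    have hzpos : 0 < S - Complex.normSq z := by
      have := hmem1 z hz; linarith
    have : ContinuousAt (fun z : ℂ => Real.log (S - Complex.normSq z)) z :=
      ContinuousAt.log (continuous_const.sub Complex.continuous_normSq).continuousAt hzpos.ne'
    exact this.continuousWithinAt
  -- maximize u - v on the closed ball of radius ρ
  obtain ⟨w, hwρ, hw'⟩ := (isCompact_closedBall (0:ℂ) ρ).exists_isMaxOn
    ⟨0, Metric.mem_closedBall_self hρ0⟩
    (hu.continuous.continuousOn.sub hvc)
  have hw : ∀ z ∈ Metric.closedBall (0:ℂ) ρ, u z - v z ≤ u w - v w := hw'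
  have hv0 : v 0 = ε := by
    rw [hvdef]; simp
  by_cases hpos : u w - v w ≤ 0
  · have h0 : u 0 - v 0 ≤ u w - v w :=
      hw 0 (Metric.mem_closedBall_self hρ0)
    rw [hv0] at h0; linarith
  push_neg at hpos
  exfalso
  -- the max point is in the open ball
  have hwS : Complex.normSq w ≤ S - τ := hmem1 w hwρ
  have hwin : Complex.normSq w < S - τ := by
    by_contra hb
    push_neg at hb
    have h2 : Complex.normSq w = S - τ := le_antisymm hwS hb
    have hlog1 : Real.log S - Real.log τ ≥ (M - ε)/2 := by
      have h3 : Real.log S - Real.log τ = Real.log (S/τ) := (Real.log_div hS.ne' hτ.ne').symm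
      have h4 : S/τ = 2 / min c 1 := by
        rw [hτdef]; field_simp
      have h5 : 1/c ≤ 2/min c 1 := by
        rw [div_le_div_iff₀ hc hminpos]
        have h6 : min c 1 ≤ c := min_le_left _ _
        nlinarith
      have h6 : Real.log (1/c) ≤ Real.log (S/τ) := by
        apply Real.log_le_log (by positivity)
        rw [h4]; exact h5
      have h7 : Real.log (1/c) = (M - ε)/2 := by
        rw [one_div, Real.log_inv, hcdef, Real.log_exp]; ring
      rw [h3]; linarith
    have hvw : M ≤ v w := by
      have : v w = ε + 2*(Real.log S - Real.log τ) := by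
        rw [hvdef]; simp only; rw [h2, show S - (S - τ) = τ by ring]
      rw [this]; linarith
    have huw : u w ≤ M := by rw [hMdef]; exact hM (hmem2 w hwS)
    linarith
  -- w is in the open ball, hence a local max of u - v
  have hwball : w ∈ Metric.ball (0:ℂ) ρ := by
    rw [Metric.mem_ball, dist_zero_right, hnorm, hρdef]
    exact Real.sqrt_lt_sqrt (Complex.normSq_nonneg w) hwin
  have hlocal : IsLocalMax (fun z => u z - v z) w := by
    filter_upwards [Metric.isOpen_ball.mem_nhds hwball] with z hz
    exact hw z (Metric.ball_subset_closedBall hz)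
  obtain ⟨x, hxdef⟩ : ∃ x : ℝ, x = w.re := ⟨_, rfl⟩
  obtain ⟨y, hydef⟩ : ∃ y : ℝ, y = w.im := ⟨_, rfl⟩
  have hxy : x^2 + y^2 = Complex.normSq w := by
    rw [hxdef, hydef, Complex.normSq_apply]; ring
  have hxyS : x^2 + y^2 < S := by rw [hxy]; linarith
  have hD : 0 < S - (x^2 + y^2) := by linarith
  -- direction 1 (real direction)
  obtain ⟨F₁, hfd₁, hEq₁, hF₁, hdF₁⟩ := vline S x y ε hxyS
  have hline₁ : ∀ t : ℝ, v (w + (t:ℂ))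
      = ε + 2*(Real.log S - Real.log (S - ((x+t)^2 + y^2))) := by
    intro t
    have hns : Complex.normSq (w + (t:ℂ)) = (x+t)^2 + y^2 := by
      rw [Complex.normSq_apply, hxdef, hydef]
      simp only [Complex.add_re, Complex.add_im, Complex.ofReal_re, Complex.ofReal_im, add_zero]
      ring
    rw [hvdef]; simp only; rw [hns]
  have htend₁ : Filter.Tendsto (fun t : ℝ => w + (t:ℂ)) (𝓝 0) (𝓝 w) := by
    have hcont : Continuous (fun t : ℝ => w + (t:ℂ)) :=
      continuous_const.add Complex.continuous_ofReal
    exact hcont.tendsto' 0 w (by simp)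
  have hmax₁ : IsLocalMax (fun t : ℝ => u (w + (t:ℂ)) -
      (ε + 2*(Real.log S - Real.log (S - ((x+t)^2 + y^2))))) 0 := by
    have h5 : ∀ᶠ t : ℝ in 𝓝 0, (fun z => u z - v z) (w + (t:ℂ)) ≤ u w - v w :=
      htend₁.eventually hlocal
    have h6 : ∀ᶠ t : ℝ in 𝓝 0, u (w + (t:ℂ)) -
        (ε + 2*(Real.log S - Real.log (S - ((x+t)^2 + y^2)))) ≤ u w - v w := by
      filter_upwards [h5] with t ht
      rw [← hline₁ t]; exact ht
    have h7 : u (w + ((0:ℝ):ℂ)) -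
        (ε + 2*(Real.log S - Real.log (S - ((x+(0:ℝ))^2 + y^2)))) = u w - v w := by
      rw [← hline₁ 0]
      norm_num
    unfold IsLocalMax IsMaxFilter
    apply Filter.Eventually.mono h6
    intro t ht
    simp only
    rw [h7]
    exact ht
  have ha₁ : ContDiff ℝ 2 (fun t : ℝ => u (w + (t:ℂ))) :=
    hu.comp (contDiff_const.add Complex.ofRealCLM.contDiff)
  have hb₁ : deriv (deriv (fun t : ℝ => u (w + (t:ℂ)))) 0
      ≤ (4*(S - (x^2+y^2)) + 8*x^2)/(S - (x^2+y^2))^2 := by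
    rw [← hdF₁]
    exact sub_deriv2 (fun t : ℝ => u (w + (t:ℂ)))
      (fun t : ℝ => ε + 2*(Real.log S - Real.log (S - ((x+t)^2 + y^2)))) F₁
      ha₁ hfd₁ hEq₁ hF₁ hmax₁
  -- direction 2 (imaginary direction)
  have hyxS : y^2 + x^2 < S := by linarith
  obtain ⟨F₂, hfd₂, hEq₂, hF₂, hdF₂⟩ := vline S y x ε hyxS
  have hline₂ : ∀ t : ℝ, v (w + (t:ℂ) * Complex.I)
      = ε + 2*(Real.log S - Real.log (S - ((y+t)^2 + x^2))) := by
    intro t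
    have hns : Complex.normSq (w + (t:ℂ) * Complex.I) = (y+t)^2 + x^2 := by
      rw [Complex.normSq_apply, hxdef, hydef]
      simp only [Complex.add_re, Complex.add_im, Complex.mul_re, Complex.mul_im,
        Complex.I_re, Complex.I_im, Complex.ofReal_re, Complex.ofReal_im]
      ring
    rw [hvdef]; simp only; rw [hns]
  have htend₂ : Filter.Tendsto (fun t : ℝ => w + (t:ℂ) * Complex.I) (𝓝 0) (𝓝 w) := by
    have hcont : Continuous (fun t : ℝ => w + (t:ℂ) * Complex.I) :=
      continuous_const.add (Complex.continuous_ofReal.mul continuous_const)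
    exact hcont.tendsto' 0 w (by simp)
  have hmax₂ : IsLocalMax (fun t : ℝ => u (w + (t:ℂ) * Complex.I) -
      (ε + 2*(Real.log S - Real.log (S - ((y+t)^2 + x^2))))) 0 := by
    have h5 : ∀ᶠ t : ℝ in 𝓝 0, (fun z => u z - v z) (w + (t:ℂ) * Complex.I) ≤ u w - v w :=
      htend₂.eventually hlocal
    have h6 : ∀ᶠ t : ℝ in 𝓝 0, u (w + (t:ℂ) * Complex.I) -
        (ε + 2*(Real.log S - Real.log (S - ((y+t)^2 + x^2)))) ≤ u w - v w := by
      filter_upwards [h5] with t ht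
      rw [← hline₂ t]; exact ht
    have h7 : u (w + ((0:ℝ):ℂ) * Complex.I) -
        (ε + 2*(Real.log S - Real.log (S - ((y+(0:ℝ))^2 + x^2)))) = u w - v w := by
      rw [← hline₂ 0]
      norm_num
    unfold IsLocalMax IsMaxFilter
    apply Filter.Eventually.mono h6
    intro t ht
    simp only
    rw [h7]
    exact ht
  have ha₂ : ContDiff ℝ 2 (fun t : ℝ => u (w + (t:ℂ) * Complex.I)) :=
    hu.comp (contDiff_const.add (Complex.ofRealCLM.contDiff.mul contDiff_const))
  have hb₂ : deriv (deriv (fun t : ℝ => u (w + (t:ℂ) * Complex.I))) 0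
      ≤ (4*(S - (y^2+x^2)) + 8*y^2)/(S - (y^2+x^2))^2 := by
    rw [← hdF₂]
    exact sub_deriv2 (fun t : ℝ => u (w + (t:ℂ) * Complex.I))
      (fun t : ℝ => ε + 2*(Real.log S - Real.log (S - ((y+t)^2 + x^2)))) F₂
      ha₂ hfd₂ hEq₂ hF₂ hmax₂
  -- combine
  obtain ⟨D, hDdef⟩ : ∃ D : ℝ, D = S - (x^2+y^2) := ⟨_, rfl⟩
  have hDpos : 0 < D := by rw [hDdef]; exact hD
  have hlaple : lapC u w ≤ 8*S/D^2 := by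
    have hsum : (4*(S - (x^2+y^2)) + 8*x^2)/(S - (x^2+y^2))^2
        + (4*(S - (y^2+x^2)) + 8*y^2)/(S - (y^2+x^2))^2 = 8*S/D^2 := by
      rw [show y^2+x^2 = x^2+y^2 by ring, hDdef]
      rw [← add_div]
      congr 1
      ring
    rw [lapC]
    linarith
  have hek : Real.exp ((1-(k:ℝ))*u w) ≤ 1 := by
    have h1k : (1:ℝ) - (k:ℝ) ≤ 0 := by
      have : (1:ℝ) ≤ (k:ℝ) := by exact_mod_cast hk
      linarith
    have h2k : (1-(k:ℝ))*u w ≤ 0 := mul_nonpos_of_nonpos_of_nonneg h1k (hnn w)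
    simpa using Real.exp_le_exp.mpr h2k
  have hDS : D ≤ S := by
    have hxx : 0 ≤ x^2 + y^2 := by positivity
    rw [hDdef]; linarith
  have hexpv : Real.exp (v w) = Real.exp ε * S^2 / D^2 := by
    have hD' : S - Complex.normSq w = D := by rw [hDdef, hxy]
    rw [hvdef]; simp only
    rw [hD']
    rw [show ε + 2*(Real.log S - Real.log D) =
      (ε + (Real.log S - Real.log D)) + (Real.log S - Real.log D) by ring]
    rw [Real.exp_add, Real.exp_add, Real.exp_sub, Real.exp_log hS, Real.exp_log hDpos]
    ring
  have hineq8 : 8*S/D^2 ≤ 2*(Real.exp (v w) - 1) := by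
    have hD2 : D^2 ≤ S^2 := pow_le_pow_left₀ hDpos.le hDS 2
    have hSe2 : Real.exp ε * S^2 = S^2 + 4*S := by linear_combination S * hSe
    have key : 8*S + 2*D^2 ≤ 2*Real.exp ε*S^2 := by linarith
    have h9 : 2*(Real.exp (v w) - 1) - 8*S/D^2 = (2*Real.exp ε*S^2 - 2*D^2 - 8*S)/D^2 := by
      rw [hexpv]; field_simp
    have h10 : 0 ≤ (2*Real.exp ε*S^2 - 2*D^2 - 8*S)/D^2 :=
      div_nonneg (by linarith) (by positivity)
    linarith
  have h12 : 2*(Real.exp (u w) - Real.exp ((1-(k:ℝ))*u w)) ≤ 8*S/D^2 := by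
    rw [← heq w]; exact hlaple
  have hchain : Real.exp (u w) ≤ Real.exp (v w) := by linarith
  have := Real.exp_le_exp.mp hchain
  linarith

/-- if `k ≥ 1` and `u` is a `C²` function on `ℂ` with
`Δu = 2(e^u − e^{(1−k)u})` and `u ≥ 0` everywhere, then `u ≡ 0`. -/
theorem stmt18 (k : ℕ) (hk : 1 ≤ k) (u : ℂ → ℝ) (hu : ContDiff ℝ 2 u)
    (heq : ∀ z : ℂ,
      lapC u z = 2 * (Real.exp (u z) - Real.exp ((1 - (k : ℝ)) * u z)))
    (hnn : ∀ z : ℂ, 0 ≤ u z) :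
    ∀ z : ℂ, u z = 0 := by
  intro z
  have h1 : ∀ ε : ℝ, 0 < ε → u z ≤ ε := by
    intro ε hε
    obtain ⟨u', hu'def⟩ : ∃ u' : ℂ → ℝ, u' = fun z' => u (z + z') := ⟨_, rfl⟩
    have hu' : ContDiff ℝ 2 u' := by
      rw [hu'def]; exact hu.comp (contDiff_const.add contDiff_id)
    have heq' : ∀ z' : ℂ, lapC u' z' = 2 * (Real.exp (u' z') - Real.exp ((1 - (k:ℝ)) * u' z')) := by
      intro z'
      have e1 : (fun t : ℝ => u' (z' + (t:ℂ))) = fun t : ℝ => u ((z + z') + (t:ℂ)) := by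
        funext t; rw [hu'def]; simp only; rw [add_assoc]
      have e2 : (fun t : ℝ => u' (z' + (t:ℂ) * Complex.I))
          = fun t : ℝ => u ((z + z') + (t:ℂ) * Complex.I) := by
        funext t; rw [hu'def]; simp only; rw [add_assoc]
      have e3 : u' z' = u (z + z') := by rw [hu'def]
      simp only [lapC]
      rw [e1, e2, e3]
      exact heq (z + z')
    have hnn' : ∀ z' : ℂ, 0 ≤ u' z' := by
      intro z'; rw [hu'def]; exact hnn _
    have h0 := key0 k hk u' hu' heq' hnn' ε hε
    rw [hu'def] at h0
    simpa using h0
  have h2 : u z ≤ 0 := by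
    by_contra h
    push_neg at h
    have := h1 (u z / 2) (by linarith)
    linarith
  exact le_antisymm h2 (hnn z)
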